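/- Suppose: (A) ‖F(u,t) − A(u(t))‖ ≤ f(∫₀ᵗ γ(‖u(s)‖) ds) for all continuous u : [0,T] → E₁ and t ∈ [0,T]; for each t ∈ [0,T] the map u ↦ F(u,t) is Fréchet differentiable on C([0,T],E₁) with derivative F_u(u,t); f and γ are continuously differentiable with monotone increasing derivatives f′ and γ′; and (E) for every t ∈ [0,T], every continuous u and every V ∈ C([0,T],E₁), ‖F_u(u,t)V − A(V(t))‖ ≤ f′(∫₀ᵗ γ(‖u(s)‖) ds) · ∫₀ᵗ γ′(‖u(s)‖) ‖V(s)‖ ds. Then condition (D) holds: for all continuous u, Δu and all t ∈ [0,T], ‖F(u+Δu,t) − F(u,t) − A(Δu(t))‖ ≤ f(∫₀ᵗ γ(‖u(s)‖+‖Δu(s)‖) ds) − f(∫₀ᵗ γ(‖u(s)‖) ds). -/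

import Mathlib

open Set Filter

noncomputable def myExt (g g' : ℝ → ℝ) : ℝ → ℝ := fun x => if 0 ≤ x then g x else g 0 + g' 0 * x

lemma myExt_eq {g g' : ℝ → ℝ} {x : ℝ} (h : 0 ≤ x) : myExt g g' x = g x := if_pos h

lemma myExt_hasDerivAt {g g' : ℝ → ℝ}
    (hd : ∀ x ∈ Set.Ici (0:ℝ), HasDerivWithinAt g (g' x) (Set.Ici 0) x) (x : ℝ) :
    HasDerivAt (myExt g g') (g' (max x 0)) x := by
  rcases lt_trichotomy x 0 with hx | hx | hx
  · have haff : HasDerivAt (fun y : ℝ => g 0 + g' 0 * y) (g' 0) x := by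
      simpa using ((hasDerivAt_id x).const_mul (g' 0)).const_add (g 0)
    have : max x 0 = 0 := max_eq_right hx.le
    rw [this]
    refine haff.congr_of_eventuallyEq ?_
    filter_upwards [Iio_mem_nhds hx] with y hy
    simp [myExt, not_le.mpr (Set.mem_Iio.mp hy)]
  · subst hx
    have h1 : HasDerivWithinAt (myExt g g') (g' 0) (Set.Ici 0) 0 :=
      (hd 0 Set.self_mem_Ici).congr (fun y hy => myExt_eq hy) (myExt_eq le_rfl)
    have h2 : HasDerivWithinAt (myExt g g') (g' 0) (Set.Iic 0) 0 := by
      have haff : HasDerivWithinAt (fun y : ℝ => g 0 + g' 0 * y) (g' 0) (Set.Iic 0) 0 := by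
        simpa using (((hasDerivAt_id (0:ℝ)).const_mul (g' 0)).const_add (g 0)).hasDerivWithinAt
      refine haff.congr (fun y hy => ?_) (by simp [myExt])
      rcases eq_or_lt_of_le (Set.mem_Iic.mp hy) with h | h
      · simp [myExt, h]
      · simp [myExt, not_le.mpr h]
    have := h2.union h1
    rw [Set.Iic_union_Ici] at this
    rw [hasDerivWithinAt_univ] at this
    simpa using this
  · have : max x 0 = x := max_eq_left hx.le
    rw [this]
    have h1 : HasDerivAt g (g' x) x :=
      (hd x hx.le).hasDerivAt (Ici_mem_nhds hx)
    refine h1.congr_of_eventuallyEq ?_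
    filter_upwards [Ioi_mem_nhds hx] with y hy
    simp [myExt, le_of_lt (Set.mem_Ioi.mp hy)]

lemma deriv_nonneg_of_monoOn {g g' : ℝ → ℝ} (hm : MonotoneOn g (Set.Ici 0))
    (hd : ∀ x ∈ Set.Ici (0:ℝ), HasDerivWithinAt g (g' x) (Set.Ici 0) x)
    {x : ℝ} (hx : 0 ≤ x) : 0 ≤ g' x := by
  have h1 : Tendsto (slope g x) (nhdsWithin x (Set.Ici 0 \ {x})) (nhds (g' x)) :=
    hasDerivWithinAt_iff_tendsto_slope.mp (hd x hx)
  have h2 : nhdsWithin x (Set.Ioi x) ≤ nhdsWithin x (Set.Ici 0 \ {x}) :=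
    nhdsWithin_mono x (fun y hy => ⟨le_trans hx (le_of_lt hy), ne_of_gt hy⟩)
  refine ge_of_tendsto (h1.mono_left h2) ?_
  filter_upwards [self_mem_nhdsWithin] with y hy
  have hy' : x < y := hy
  have := hm (Set.mem_Ici.mpr hx) (Set.mem_Ici.mpr (hx.trans hy'.le)) hy'.le
  rw [slope_def_field]
  exact div_nonneg (by linarith) (by linarith)



/-- **Lemma 1** (Sidorov–Sidorov). If `F(·,t)` is Fréchet differentiable on
`C([0,T],E₁)`, `f, γ` are continuously differentiable with monotone increasing
derivatives, and condition (E) holds, then condition (D) holds. -/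
theorem stmt_1
    {E₁ E₂ : Type*} [NormedAddCommGroup E₁] [NormedSpace ℝ E₁] [CompleteSpace E₁]
    [NormedAddCommGroup E₂] [NormedSpace ℝ E₂] [CompleteSpace E₂]
    (T : ℝ) (hT : 0 < T)
    (A : E₁ →L[ℝ] E₂) (Ainv : E₂ →L[ℝ] E₁)
    (hA₁ : ∀ x, Ainv (A x) = x) (hA₂ : ∀ y, A (Ainv y) = y)
    (F : C(Set.Icc (0:ℝ) T, E₁) → ℝ → E₂)
    (f γ f' γ' : ℝ → ℝ)
    (hfc : ContinuousOn f (Set.Ici 0)) (hγc : ContinuousOn γ (Set.Ici 0))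
    (hfm : MonotoneOn f (Set.Ici 0)) (hγm : MonotoneOn γ (Set.Ici 0))
    (hfnn : ∀ x ∈ Set.Ici (0:ℝ), 0 ≤ f x) (hγnn : ∀ x ∈ Set.Ici (0:ℝ), 0 ≤ γ x)
    -- `f` and `γ` are continuously differentiable on `[0,∞)`
    (hfd : ∀ x ∈ Set.Ici (0:ℝ), HasDerivWithinAt f (f' x) (Set.Ici 0) x)
    (hγd : ∀ x ∈ Set.Ici (0:ℝ), HasDerivWithinAt γ (γ' x) (Set.Ici 0) x)
    (hf'c : ContinuousOn f' (Set.Ici 0)) (hγ'c : ContinuousOn γ' (Set.Ici 0))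
    -- the derivatives `f'` and `γ'` are monotone increasing
    (hf'm : MonotoneOn f' (Set.Ici 0)) (hγ'm : MonotoneOn γ' (Set.Ici 0))
    -- `F(·,t)` is Fréchet differentiable with derivative `F' u t`
    (F' : C(Set.Icc (0:ℝ) T, E₁) → ℝ → (C(Set.Icc (0:ℝ) T, E₁) →L[ℝ] E₂))
    (hFd : ∀ (u : C(Set.Icc (0:ℝ) T, E₁)) (t : Set.Icc (0:ℝ) T),
      HasFDerivAt (fun v => F v (t : ℝ)) (F' u (t : ℝ)) u)
    -- condition (A)
    (condA : ∀ (u : C(Set.Icc (0:ℝ) T, E₁)) (t : Set.Icc (0:ℝ) T),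
      ‖F u (t : ℝ) - A (u t)‖ ≤
        f (∫ s in (0:ℝ)..(t : ℝ), γ ‖u (Set.projIcc 0 T hT.le s)‖))
    -- condition (E)
    (condE : ∀ (u : C(Set.Icc (0:ℝ) T, E₁)) (t : Set.Icc (0:ℝ) T)
      (V : C(Set.Icc (0:ℝ) T, E₁)),
      ‖F' u (t : ℝ) V - A (V t)‖ ≤
        f' (∫ s in (0:ℝ)..(t : ℝ), γ ‖u (Set.projIcc 0 T hT.le s)‖) *
          ∫ s in (0:ℝ)..(t : ℝ),
            γ' ‖u (Set.projIcc 0 T hT.le s)‖ * ‖V (Set.projIcc 0 T hT.le s)‖) :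
    -- conclusion: condition (D)
    ∀ (u Δu : C(Set.Icc (0:ℝ) T, E₁)) (t : Set.Icc (0:ℝ) T),
      ‖F (u + Δu) (t : ℝ) - F u (t : ℝ) - A (Δu t)‖ ≤
        f (∫ s in (0:ℝ)..(t : ℝ),
            γ (‖u (Set.projIcc 0 T hT.le s)‖ + ‖Δu (Set.projIcc 0 T hT.le s)‖)) -
        f (∫ s in (0:ℝ)..(t : ℝ), γ ‖u (Set.projIcc 0 T hT.le s)‖) := by
  intro u Δu t
  have ht0 : (0:ℝ) ≤ (t:ℝ) := t.2.1
  have hf'nn : ∀ x : ℝ, 0 ≤ x → 0 ≤ f' x := fun x hx => deriv_nonneg_of_monoOn hfm hfd hx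
  have hγ'nn : ∀ x : ℝ, 0 ≤ x → 0 ≤ γ' x := fun x hx => deriv_nonneg_of_monoOn hγm hγd hx
  set U : ℝ → ℝ := fun s => ‖u (Set.projIcc 0 T hT.le s)‖ with hUdef
  set D : ℝ → ℝ := fun s => ‖Δu (Set.projIcc 0 T hT.le s)‖ with hDdef
  have hUc : Continuous U := (u.continuous.comp continuous_projIcc).norm
  have hDc : Continuous D := (Δu.continuous.comp continuous_projIcc).norm
  have hUnn : ∀ s, 0 ≤ U s := fun s => norm_nonneg _
  have hDnn : ∀ s, 0 ≤ D s := fun s => norm_nonneg _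
  have hUle : ∀ s, U s ≤ ‖u‖ := fun s => u.norm_coe_le_norm _
  have hDle : ∀ s, D s ≤ ‖Δu‖ := fun s => Δu.norm_coe_le_norm _
  set Γ : ℝ → ℝ := myExt γ γ' with hΓdef
  set Γ' : ℝ → ℝ := fun x => γ' (max x 0) with hΓ'def
  have hΓd : ∀ x, HasDerivAt Γ (Γ' x) x := myExt_hasDerivAt hγd
  have hΓc : Continuous Γ := continuous_iff_continuousAt.mpr fun x => (hΓd x).continuousAt
  have hΓ'c : Continuous Γ' :=
    hγ'c.comp_continuous (continuous_id.max continuous_const) (fun x => Set.mem_Ici.mpr (le_max_right _ _))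
  have hΓeq : ∀ x : ℝ, 0 ≤ x → Γ x = γ x := fun x hx => myExt_eq hx
  have hΓ'eq : ∀ x : ℝ, 0 ≤ x → Γ' x = γ' x := fun x hx => by
    rw [hΓ'def]; simp only []; rw [max_eq_left hx]
  set I : ℝ → ℝ := fun θ => ∫ s in (0:ℝ)..(t:ℝ), Γ (U s + θ * D s) with hIdef
  set I' : ℝ → ℝ := fun θ => ∫ s in (0:ℝ)..(t:ℝ), Γ' (U s + θ * D s) * D s with hI'def
  have hIargc : ∀ θ : ℝ, Continuous (fun s => U s + θ * D s) :=
    fun θ => hUc.add (continuous_const.mul hDc)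
  have hIintc : ∀ θ : ℝ, Continuous (fun s => Γ (U s + θ * D s)) :=
    fun θ => hΓc.comp (hIargc θ)
  have hI'intc : ∀ θ : ℝ, Continuous (fun s => Γ' (U s + θ * D s) * D s) :=
    fun θ => (hΓ'c.comp (hIargc θ)).mul hDc
  have hId : ∀ θ₀ : ℝ, HasDerivAt I (I' θ₀) θ₀ := by
    intro θ₀
    set M : ℝ := ‖u‖ + (|θ₀| + 1) * ‖Δu‖ with hM
    have hM0 : 0 ≤ M := by positivity
    have key := (intervalIntegral.hasDerivAt_integral_of_dominated_loc_of_deriv_le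
      (F := fun x s => Γ (U s + x * D s)) (F' := fun x s => Γ' (U s + x * D s) * D s)
      (bound := fun _ => γ' M * ‖Δu‖) (μ := MeasureTheory.volume) (a := (0:ℝ)) (b := (t:ℝ))
      (Metric.ball_mem_nhds θ₀ zero_lt_one)
      (Filter.Eventually.of_forall fun x => (hIintc x).aestronglyMeasurable)
      ((hIintc θ₀).intervalIntegrable _ _)
      ((hI'intc θ₀).aestronglyMeasurable)
      ?_ (intervalIntegrable_const) ?_).2
    · exact key
    · refine Filter.Eventually.of_forall fun s _ x hx => ?_
      have h2 : |x - θ₀| < 1 := by simpa [Real.dist_eq] using Metric.mem_ball.mp hx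
      have hxb : |x| ≤ |θ₀| + 1 := by
        have := abs_sub_abs_le_abs_sub x θ₀
        linarith
      have h1 : U s + x * D s ≤ M := by
        have ha : x * D s ≤ |x| * D s := mul_le_mul_of_nonneg_right (le_abs_self x) (hDnn s)
        have h3 : |x| * D s ≤ (|θ₀| + 1) * ‖Δu‖ :=
          mul_le_mul hxb (hDle s) (hDnn s) (by positivity)
        have := hUle s
        rw [hM]; linarith
      have harg : max (U s + x * D s) 0 ≤ M := max_le h1 hM0
      have hΓ'nn : 0 ≤ Γ' (U s + x * D s) := hγ'nn _ (le_max_right _ _)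
      have hmono : Γ' (U s + x * D s) ≤ γ' M :=
        hγ'm (Set.mem_Ici.mpr (le_max_right _ _)) (Set.mem_Ici.mpr hM0) harg
      calc ‖Γ' (U s + x * D s) * D s‖ = Γ' (U s + x * D s) * D s := by
            rw [Real.norm_eq_abs, abs_of_nonneg (mul_nonneg hΓ'nn (hDnn s))]
        _ ≤ γ' M * ‖Δu‖ := mul_le_mul hmono (hDle s) (hDnn s) (hγ'nn M hM0)
    · refine Filter.Eventually.of_forall fun s _ x _ => ?_
      have hinner : HasDerivAt (fun x : ℝ => U s + x * D s) (D s) x := by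
        simpa using ((hasDerivAt_id x).mul_const (D s)).const_add (U s)
      exact (hΓd (U s + x * D s)).comp x hinner
  have hIc : Continuous I := continuous_iff_continuousAt.mpr fun x => (hId x).continuousAt
  have hInn : ∀ θ : ℝ, 0 ≤ θ → 0 ≤ I θ := by
    intro θ hθ
    apply intervalIntegral.integral_nonneg ht0
    intro s _
    have harg : 0 ≤ U s + θ * D s := add_nonneg (hUnn s) (mul_nonneg hθ (hDnn s))
    rw [hΓeq _ harg]; exact hγnn _ harg
  have hI0 : I 0 = ∫ s in (0:ℝ)..(t:ℝ), γ ‖u (Set.projIcc 0 T hT.le s)‖ := by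
    apply intervalIntegral.integral_congr
    intro s _
    show Γ (U s + 0 * D s) = γ ‖u (Set.projIcc 0 T hT.le s)‖
    rw [zero_mul, add_zero, hΓeq _ (hUnn s)]
  have hI1 : I 1 = ∫ s in (0:ℝ)..(t:ℝ),
      γ (‖u (Set.projIcc 0 T hT.le s)‖ + ‖Δu (Set.projIcc 0 T hT.le s)‖) := by
    apply intervalIntegral.integral_congr
    intro s _
    show Γ (U s + 1 * D s) = γ (‖u (Set.projIcc 0 T hT.le s)‖ + ‖Δu (Set.projIcc 0 T hT.le s)‖)
    rw [one_mul, hΓeq _ (add_nonneg (hUnn s) (hDnn s))]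
  set B : ℝ → ℝ := fun θ => f (I θ) - f (I 0) with hBdef
  set B' : ℝ → ℝ := fun θ => f' (I θ) * I' θ with hB'def
  have hBc : ContinuousOn B (Set.Icc 0 1) :=
    (hfc.comp hIc.continuousOn (fun x hx => hInn x hx.1)).sub continuousOn_const
  have hBd : ∀ θ ∈ Set.Ico (0:ℝ) 1, HasDerivWithinAt B (B' θ) (Set.Ici θ) θ := by
    intro θ hθ
    have hmaps : Set.MapsTo I (Set.Icc θ 1) (Set.Ici 0) := fun x hx => hInn x (hθ.1.trans hx.1)
    have h1 : HasDerivWithinAt (fun θ => f (I θ)) (f' (I θ) * I' θ) (Set.Icc θ 1) θ :=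
      (hfd (I θ) (hInn θ hθ.1)).comp θ ((hId θ).hasDerivWithinAt) hmaps
    have h2 := h1.mono_of_mem_nhdsWithin (Icc_mem_nhdsGE_of_mem ⟨le_refl θ, hθ.2⟩)
    exact h2.sub_const _
  set w : ℝ → C(Set.Icc (0:ℝ) T, E₁) := fun θ => u + θ • Δu with hwdef
  have hwd : ∀ θ : ℝ, HasDerivAt w Δu θ := fun θ => by
    exact (((hasDerivAt_id θ).smul_const Δu).const_add u).congr_deriv (one_smul _ _)
  set g : ℝ → E₂ := fun θ => F (w θ) (t:ℝ) - F u (t:ℝ) - θ • (A (Δu t)) with hgdef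
  have hgd : ∀ θ : ℝ, HasDerivAt g (F' (w θ) (t:ℝ) Δu - A (Δu t)) θ := by
    intro θ
    have h1 : HasDerivAt (fun θ => F (w θ) (t:ℝ)) (F' (w θ) (t:ℝ) Δu) θ :=
      (hFd (w θ) t).comp_hasDerivAt θ (hwd θ)
    have h2 : HasDerivAt (fun θ : ℝ => θ • (A (Δu t))) (A (Δu t)) θ := by
      simpa using (hasDerivAt_id θ).smul_const (A (Δu t))
    exact (h1.sub_const (F u (t:ℝ))).sub h2
  have hwnorm : ∀ θ : ℝ, 0 ≤ θ → ∀ s : ℝ,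
      ‖(w θ) (Set.projIcc 0 T hT.le s)‖ ≤ U s + θ * D s := by
    intro θ hθ s
    rw [hwdef]
    simp only [ContinuousMap.add_apply, ContinuousMap.smul_apply]
    calc ‖u (Set.projIcc 0 T hT.le s) + θ • Δu (Set.projIcc 0 T hT.le s)‖
        ≤ ‖u (Set.projIcc 0 T hT.le s)‖ + ‖θ • Δu (Set.projIcc 0 T hT.le s)‖ := norm_add_le _ _
      _ = U s + |θ| * D s := by rw [norm_smul, Real.norm_eq_abs]
      _ = U s + θ * D s := by rw [abs_of_nonneg hθ]
  have hbound : ∀ θ ∈ Set.Ico (0:ℝ) 1, ‖F' (w θ) (t:ℝ) Δu - A (Δu t)‖ ≤ B' θ := by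
    intro θ hθ
    have hwc : Continuous (fun s => ‖(w θ) (Set.projIcc 0 T hT.le s)‖) :=
      ((w θ).continuous.comp continuous_projIcc).norm
    have hJint : IntervalIntegrable
        (fun s => γ ‖(w θ) (Set.projIcc 0 T hT.le s)‖) MeasureTheory.volume 0 (t:ℝ) :=
      (hγc.comp_continuous hwc (fun s => norm_nonneg _)).intervalIntegrable _ _
    have hKint : IntervalIntegrable
        (fun s => γ' ‖(w θ) (Set.projIcc 0 T hT.le s)‖ * ‖Δu (Set.projIcc 0 T hT.le s)‖)
        MeasureTheory.volume 0 (t:ℝ) :=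
      ((hγ'c.comp_continuous hwc (fun s => norm_nonneg _)).mul hDc).intervalIntegrable _ _
    have hJle : (∫ s in (0:ℝ)..(t:ℝ), γ ‖(w θ) (Set.projIcc 0 T hT.le s)‖) ≤ I θ := by
      apply intervalIntegral.integral_mono_on ht0 hJint ((hIintc θ).intervalIntegrable _ _)
      intro s _
      have harg : 0 ≤ U s + θ * D s := add_nonneg (hUnn s) (mul_nonneg hθ.1 (hDnn s))
      rw [hΓeq _ harg]
      exact hγm (Set.mem_Ici.mpr (norm_nonneg _)) (Set.mem_Ici.mpr harg) (hwnorm θ hθ.1 s)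
    have hJnn : 0 ≤ ∫ s in (0:ℝ)..(t:ℝ), γ ‖(w θ) (Set.projIcc 0 T hT.le s)‖ :=
      intervalIntegral.integral_nonneg ht0 fun s _ => hγnn _ (norm_nonneg _)
    have hKle : (∫ s in (0:ℝ)..(t:ℝ),
        γ' ‖(w θ) (Set.projIcc 0 T hT.le s)‖ * ‖Δu (Set.projIcc 0 T hT.le s)‖) ≤ I' θ := by
      apply intervalIntegral.integral_mono_on ht0 hKint ((hI'intc θ).intervalIntegrable _ _)
      intro s _
      have harg : 0 ≤ U s + θ * D s := add_nonneg (hUnn s) (mul_nonneg hθ.1 (hDnn s))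
      rw [hΓ'eq _ harg]
      exact mul_le_mul_of_nonneg_right
        (hγ'm (Set.mem_Ici.mpr (norm_nonneg _)) (Set.mem_Ici.mpr harg) (hwnorm θ hθ.1 s))
        (hDnn s)
    calc ‖F' (w θ) (t:ℝ) Δu - A (Δu t)‖
        ≤ f' (∫ s in (0:ℝ)..(t:ℝ), γ ‖(w θ) (Set.projIcc 0 T hT.le s)‖) *
            ∫ s in (0:ℝ)..(t:ℝ),
              γ' ‖(w θ) (Set.projIcc 0 T hT.le s)‖ * ‖Δu (Set.projIcc 0 T hT.le s)‖ :=
          condE (w θ) t Δu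
      _ ≤ f' (I θ) * I' θ := by
          have hKnn : 0 ≤ ∫ s in (0:ℝ)..(t:ℝ),
              γ' ‖(w θ) (Set.projIcc 0 T hT.le s)‖ * ‖Δu (Set.projIcc 0 T hT.le s)‖ :=
            intervalIntegral.integral_nonneg ht0
              fun s _ => mul_nonneg (hγ'nn _ (norm_nonneg _)) (norm_nonneg _)
          exact mul_le_mul
            (hf'm (Set.mem_Ici.mpr hJnn) (Set.mem_Ici.mpr (hInn θ hθ.1)) hJle)
            hKle hKnn (hf'nn _ (hInn θ hθ.1))
      _ = B' θ := rfl
  have main := image_norm_le_of_norm_deriv_right_le_deriv_boundary'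
    (f := g) (f' := fun θ => F' (w θ) (t:ℝ) Δu - A (Δu t)) (a := (0:ℝ)) (b := (1:ℝ))
    (fun θ _ => (hgd θ).continuousAt.continuousWithinAt)
    (fun θ _ => (hgd θ).hasDerivWithinAt)
    (by simp [hgdef, hwdef, hBdef]) hBc hBd hbound
    (Set.right_mem_Icc.mpr zero_le_one)
  have hg1 : g 1 = F (u + Δu) (t:ℝ) - F u (t:ℝ) - A (Δu t) := by
    simp [hgdef, hwdef]
  have hB1 : B 1 = f (I 1) - f (I 0) := rfl
  rw [hg1, hB1, hI1, hI0] at main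
  exact main
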